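/- Let k, t ≥ 1 be integers and let D be a digraph admitting a directed tree-decomposition (T, β, γ) with |Γ(t')| ≤ k for every node t' ∈ V(T) (i.e. of width less than k). Then either D contains t pairwise vertex-disjoint even dicycles, or there exists a set A ⊆ V(D) with |A| ≤ k(t−1) such that D − A contains no even dicycle. -/

import Mathlib

/-- A dicycle (directed cycle) of length `len ≥ 2` in the digraph on `V` with adjacency
relation `D`: a cyclic sequence of `len` distinct vertices with an edge from each vertex
to the next one (indices modulo `len`). -/
structure Dicycle {V : Type} (D : V → V → Prop) : Type where
  len : ℕ
  two_le_len : 2 ≤ len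
  vtx : ℕ → V
  inj : ∀ i < len, ∀ j < len, vtx i = vtx j → i = j
  adj : ∀ i < len, D (vtx i) (vtx ((i + 1) % len))

/-- The set of vertices lying on a dicycle. -/
def Dicycle.support {V : Type} {D : V → V → Prop} (c : Dicycle D) : Set V :=
  {v | ∃ i < c.len, c.vtx i = v}

/-- A dicycle is even if its length is even. -/
def Dicycle.IsEven {V : Type} {D : V → V → Prop} (c : Dicycle D) : Prop :=
  Even c.len

/-- A quarter-integral packing of `k` even dicycles in the digraph `D`: a family
of `k` even dicycles such that every vertex lies on at most four of them. -/
def QuarterPacking {V : Type} (D : V → V → Prop) (k : ℕ) : Prop :=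
  ∃ C : Fin k → Dicycle D,
    (∀ i, (C i).IsEven) ∧ ∀ v : V, {i : Fin k | v ∈ (C i).support}.ncard ≤ 4

/-- `Y` strongly guards `X` in `D`: every directed walk that starts and ends in `X`
and contains a vertex outside of `X` contains a vertex of `Y`. -/
def StronglyGuards {V : Type} (D : V → V → Prop) (Y X : Set V) : Prop :=
  ∀ (a : V) (w : List V), List.Chain D a w →
    a ∈ X → (a :: w).getLast (List.cons_ne_nil a w) ∈ X →
    (∃ v ∈ a :: w, v ∉ X) → ∃ v ∈ a :: w, v ∈ Y

/-- A directed tree-decomposition of the digraph `D`.  The underlying arborescence is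
encoded by a finite node type `T`, a root, and a parent function under whose iteration
every node reaches the root; the edges of the arborescence are the pairs
`(parent t, t)` for `t ≠ root`.  The (possibly empty) bags partition the vertex set, and
for every edge `(parent t, t)` the guard set `guard t` strongly guards the union of the
bags of the subtree rooted at `t`. -/
structure DirTreeDecomp {V : Type} (D : V → V → Prop) : Type 1 where
  T : Type
  fintypeT : Fintype T
  root : T
  parent : T → T
  parent_root : parent root = root
  reaches_root : ∀ t : T, ∃ n : ℕ, parent^[n] t = root
  bag : T → Set V
  guard : T → Set V
  bag_disjoint : ∀ s t : T, s ≠ t → Disjoint (bag s) (bag t)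
  bag_union : (⋃ t : T, bag t) = Set.univ
  guards : ∀ t : T, t ≠ root →
    StronglyGuards D (guard t)
      (⋃ s ∈ {s : T | ∃ n : ℕ, parent^[n] s = t}, bag s)

/-- `β(T_t)`: the union of the bags of the subtree rooted at `t`. -/
def DirTreeDecomp.subtreeBag {V : Type} {D : V → V → Prop} (𝒯 : DirTreeDecomp D)
    (t : 𝒯.T) : Set V :=
  ⋃ s ∈ {s : 𝒯.T | ∃ n : ℕ, 𝒯.parent^[n] s = t}, 𝒯.bag s

/-- `Γ(t)`: the bag of `t` together with the guards of all edges incident with `t`,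
i.e. the guard of the edge into `t` (when `t` is not the root) and the guards of the
edges into the children of `t`. -/
def DirTreeDecomp.Gam {V : Type} {D : V → V → Prop} (𝒯 : DirTreeDecomp D)
    (t : 𝒯.T) : Set V :=
  𝒯.bag t ∪ (⋃ s ∈ {s : 𝒯.T | s ≠ 𝒯.root ∧ (s = t ∨ 𝒯.parent s = t)}, 𝒯.guard s)

section Aux

open Function

variable {V : Type} {D : V → V → Prop}

/-- Chain built from iterating a function along indices. -/
lemma chain_of_fn (R : V → V → Prop) :
    ∀ (n : ℕ) (f : ℕ → V), (∀ m < n, R (f m) (f (m + 1))) →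
      List.Chain R (f 0) ((List.range n).map fun m => f (m + 1)) := by
  intro n
  induction n with
  | zero => intro f _; exact List.Chain.nil
  | succ n ih =>
    intro f hf
    rw [List.range_succ_eq_map]
    simp only [List.map_cons, List.map_map]
    refine List.Chain.cons (hf 0 (Nat.succ_pos n)) ?_
    have h2 := ih (fun m => f (m + 1)) (fun m hm => hf (m + 1) (by omega))
    exact h2

lemma getLast_fn_list (f : ℕ → V) (n : ℕ) :
    (f 0 :: (List.range n).map fun m => f (m + 1)).getLast (List.cons_ne_nil _ _) = f n := by
  rw [List.getLast_eq_getElem]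
  rcases n with _ | n
  · simp
  · simp

lemma mem_fn_list {f : ℕ → V} {n : ℕ} {v : V} :
    v ∈ (f 0 :: (List.range n).map fun m => f (m + 1)) ↔ ∃ m, m ≤ n ∧ f m = v := by
  simp only [List.mem_cons, List.mem_map, List.mem_range]
  constructor
  · rintro (rfl | ⟨m, hm, rfl⟩)
    · exact ⟨0, Nat.zero_le _, rfl⟩
    · exact ⟨m + 1, by omega, rfl⟩
  · rintro ⟨m, hm, rfl⟩
    rcases m with _ | m
    · exact Or.inl rfl
    · exact Or.inr ⟨m, by omega, rfl⟩

lemma getLast_map_cons {α β : Type*} (f : α → β) :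
    ∀ (w : List α) (a : α),
      ((f a) :: w.map f).getLast (List.cons_ne_nil _ _) =
        f ((a :: w).getLast (List.cons_ne_nil _ _)) := by
  intro w
  induction w with
  | nil => intro a; simp
  | cons b w ih =>
    intro a
    have h1 : (f a :: List.map f (b :: w)).getLast (List.cons_ne_nil _ _) =
        (List.map f (b :: w)).getLast (by simp) := List.getLast_cons (by simp)
    have h2 : ((a :: b :: w).getLast (List.cons_ne_nil _ _)) =
        (b :: w).getLast (by simp) := List.getLast_cons (by simp)
    rw [h1, h2]
    exact ih b

lemma Dicycle.vtx_mem_support (c : Dicycle D) {i : ℕ} (hi : i < c.len) :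
    c.vtx i ∈ c.support := ⟨i, hi, rfl⟩

/-- A dicycle meeting both a strongly guarded set and its complement meets the guard. -/
lemma dicycle_hits {Y X : Set V} (hG : StronglyGuards D Y X) (c : Dicycle D)
    (h1 : ∃ v ∈ c.support, v ∈ X) (h2 : ∃ v ∈ c.support, v ∉ X) :
    ∃ v ∈ c.support, v ∈ Y := by
  obtain ⟨x, ⟨i, hi, hix⟩, hxX⟩ := h1
  obtain ⟨y, ⟨j, hj, hjy⟩, hyX⟩ := h2
  have hlen : 0 < c.len := by have := c.two_le_len; omega
  set L := c.len with hL
  set f : ℕ → V := fun m => c.vtx ((i + m) % L) with hfdef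
  have hmod : ∀ m, (i + (m + 1)) % L = ((i + m) % L + 1) % L := by
    intro m
    conv_lhs => rw [show i + (m + 1) = (i + m) + 1 by ring, Nat.add_mod (i + m) 1 L]
    rw [Nat.one_mod_eq_one.mpr (by have := c.two_le_len; omega)]
  have hfR : ∀ m < L, D (f m) (f (m + 1)) := by
    intro m hm
    have h1 := c.adj ((i + m) % L) (Nat.mod_lt _ hlen)
    simp only [hfdef]
    rw [hmod m]
    exact h1
  have hchain := chain_of_fn D L f hfR
  have hf0 : f 0 = c.vtx i := by simp [hfdef, Nat.mod_eq_of_lt hi]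
  have hfL : f L = c.vtx i := by simp [hfdef, Nat.add_mod_right, Nat.mod_eq_of_lt hi]
  have hlast := getLast_fn_list f L
  -- the index hitting j
  have hjmem : ∃ m, m ≤ L ∧ f m = c.vtx j := by
    refine ⟨(j + L - i) % L, le_of_lt (Nat.mod_lt _ hlen), ?_⟩
    simp only [hfdef]
    congr 1
    rw [Nat.add_mod, Nat.mod_mod_of_dvd _ (dvd_refl L), ← Nat.add_mod]
    have : i + (j + L - i) = j + L := by omega
    rw [this, Nat.add_mod_right, Nat.mod_eq_of_lt hj]
  obtain ⟨u, hu, huY⟩ :=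
    hG (f 0) ((List.range L).map fun m => f (m + 1)) hchain
      (by rw [hf0, hix]; exact hxX)
      (by rw [hlast, hfL, hix]; exact hxX)
      (by
        obtain ⟨m, hm, hfm⟩ := hjmem
        exact ⟨c.vtx j, mem_fn_list.mpr ⟨m, hm, hfm⟩, by rw [hjy]; exact hyX⟩)
  obtain ⟨m, hm, rfl⟩ := mem_fn_list.mp hu
  exact ⟨f m, c.vtx_mem_support (Nat.mod_lt _ hlen), huY⟩

lemma DirTreeDecomp.subtreeBag_root (𝒯 : DirTreeDecomp D) :
    𝒯.subtreeBag 𝒯.root = Set.univ := by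
  apply Set.eq_univ_of_univ_subset
  rw [← 𝒯.bag_union]
  refine Set.iUnion_subset fun s v hv => ?_
  exact Set.mem_biUnion (𝒯.reaches_root s) hv

lemma DirTreeDecomp.bag_subset_Gam (𝒯 : DirTreeDecomp D) (t : 𝒯.T) :
    𝒯.bag t ⊆ 𝒯.Gam t := fun v hv => Or.inl hv

lemma DirTreeDecomp.guard_subset_Gam (𝒯 : DirTreeDecomp D) {s t : 𝒯.T}
    (hs : s ≠ 𝒯.root) (h : s = t ∨ 𝒯.parent s = t) : 𝒯.guard s ⊆ 𝒯.Gam t :=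
  fun v hv => Or.inr (Set.mem_biUnion ⟨hs, h⟩ hv)

/-- Restriction of a digraph to a subset of vertices. -/
def restr (D : V → V → Prop) (U : Set V) : ↥U → ↥U → Prop :=
  fun a b => D a.1 b.1

/-- Lifting a dicycle of the restricted digraph to the original one. -/
def Dicycle.lift {U : Set V} (c : Dicycle (restr D U)) : Dicycle D where
  len := c.len
  two_le_len := c.two_le_len
  vtx := fun m => (c.vtx m).1
  inj := fun i hi j hj h => c.inj i hi j hj (Subtype.ext h)
  adj := fun i hi => c.adj i hi

lemma Dicycle.lift_support {U : Set V} (c : Dicycle (restr D U)) :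
    c.lift.support = Subtype.val '' c.support := by
  ext v
  constructor
  · rintro ⟨i, hi, rfl⟩
    exact ⟨c.vtx i, ⟨i, hi, rfl⟩, rfl⟩
  · rintro ⟨x, ⟨i, hi, rfl⟩, rfl⟩
    exact ⟨i, hi, rfl⟩

/-- Restricting a dicycle whose support lies in `U`. -/
def Dicycle.restrict (c : Dicycle D) (U : Set V) (h : c.support ⊆ U) :
    Dicycle (restr D U) where
  len := c.len
  two_le_len := c.two_le_len
  vtx := fun m => ⟨c.vtx (m % c.len),
    h (c.vtx_mem_support (Nat.mod_lt _ (by have := c.two_le_len; omega)))⟩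
  inj := by
    intro i hi j hj hij
    have := congrArg Subtype.val hij
    simp only [Nat.mod_eq_of_lt hi, Nat.mod_eq_of_lt hj] at this
    exact c.inj i hi j hj this
  adj := by
    intro i hi
    show D (c.vtx (i % c.len)) (c.vtx (((i + 1) % c.len) % c.len))
    rw [Nat.mod_eq_of_lt hi, Nat.mod_mod_of_dvd _ (dvd_refl c.len)]
    exact c.adj i hi

lemma Dicycle.restrict_support_subset {c : Dicycle D} {U : Set V} {h : c.support ⊆ U}
    {a : ↥U} (ha : a ∈ (c.restrict U h).support) : (a : V) ∈ c.support := by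
  obtain ⟨i, hi, rfl⟩ := ha
  exact c.vtx_mem_support (Nat.mod_lt _ (by have := c.two_le_len; omega))

lemma ncard_preimage_val_le [Finite V] (U : Set V) (S : Set V) :
    (Subtype.val ⁻¹' S : Set ↥U).ncard ≤ S.ncard := by
  rw [← Set.ncard_image_of_injective _ Subtype.val_injective]
  exact Set.ncard_le_ncard (Set.image_preimage_subset _ _) S.toFinite

/-- Restriction of a directed tree-decomposition to a vertex subset. -/
def DirTreeDecomp.restrict (𝒯 : DirTreeDecomp D) (U : Set V) :
    DirTreeDecomp (restr D U) where
  T := 𝒯.T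
  fintypeT := 𝒯.fintypeT
  root := 𝒯.root
  parent := 𝒯.parent
  parent_root := 𝒯.parent_root
  reaches_root := 𝒯.reaches_root
  bag := fun t => Subtype.val ⁻¹' 𝒯.bag t
  guard := fun t => Subtype.val ⁻¹' 𝒯.guard t
  bag_disjoint := fun s t h => (𝒯.bag_disjoint s t h).preimage _
  bag_union := by
    rw [← Set.preimage_iUnion, 𝒯.bag_union, Set.preimage_univ]
  guards := by
    intro t ht a w hchain ha hlast hout
    have hXeq : (⋃ s ∈ {s : 𝒯.T | ∃ n : ℕ, 𝒯.parent^[n] s = t},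
        (Subtype.val ⁻¹' 𝒯.bag s : Set ↥U)) =
        Subtype.val ⁻¹' (⋃ s ∈ {s : 𝒯.T | ∃ n : ℕ, 𝒯.parent^[n] s = t}, 𝒯.bag s) := by
      simp [Set.preimage_iUnion]
    rw [hXeq] at ha hlast hout
    have hchain' : List.Chain D a.1 (w.map Subtype.val) :=
      (List.isChain_cons_map Subtype.val).mpr hchain
    have hlast' : ((a : V) :: w.map Subtype.val).getLast (List.cons_ne_nil _ _) ∈
        (⋃ s ∈ {s : 𝒯.T | ∃ n : ℕ, 𝒯.parent^[n] s = t}, 𝒯.bag s) := by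
      rw [getLast_map_cons Subtype.val w a]
      exact hlast
    obtain ⟨u, hu, huY⟩ := 𝒯.guards t ht a.1 (w.map Subtype.val) hchain' ha hlast'
      (by
        obtain ⟨v, hv, hvX⟩ := hout
        refine ⟨v.1, ?_, hvX⟩
        rcases List.mem_cons.mp hv with rfl | hv'
        · exact List.mem_cons_self
        · exact List.mem_cons_of_mem _ (List.mem_map_of_mem hv'))
    have hu' : u ∈ ((a :: w).map Subtype.val) := hu
    obtain ⟨u', hu'mem, rfl⟩ := List.mem_map.mp hu'
    exact ⟨u', hu'mem, huY⟩

lemma DirTreeDecomp.restrict_Gam (𝒯 : DirTreeDecomp D) (U : Set V) (t : 𝒯.T) :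
    (𝒯.restrict U).Gam t = Subtype.val ⁻¹' 𝒯.Gam t := by
  simp only [DirTreeDecomp.Gam, DirTreeDecomp.restrict, Set.preimage_union,
    Set.preimage_iUnion]
  rfl

/-- The main induction. -/
theorem aux_ErdosPosa : ∀ (t : ℕ), 1 ≤ t →
    ∀ (V : Type) [Fintype V] (D : V → V → Prop) (k : ℕ), 1 ≤ k →
    ∀ (𝒯 : DirTreeDecomp D), (∀ s : 𝒯.T, (𝒯.Gam s).ncard ≤ k) →
    (∃ C : Fin t → Dicycle D, (∀ i, (C i).IsEven) ∧
        ∀ i j : Fin t, i ≠ j → Disjoint (C i).support (C j).support) ∨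
      ∃ A : Set V, A.ncard ≤ k * (t - 1) ∧
        ∀ c : Dicycle D, Disjoint c.support A → ¬ c.IsEven := by
  refine Nat.le_induction ?_ ?_
  · -- base case t = 1
    intro V _ D k hk 𝒯 hwidth
    by_cases hex : ∃ c : Dicycle D, c.IsEven
    · obtain ⟨c0, hc0⟩ := hex
      exact Or.inl ⟨fun _ => c0, fun _ => hc0,
        fun i j hij => absurd (Subsingleton.elim i j) hij⟩
    · exact Or.inr ⟨∅, by simp, fun c _ hc => hex ⟨c, hc⟩⟩
  · -- inductive step
    intro t ht IH V _ D k hk 𝒯 hwidth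
    classical
    by_cases hex : ∃ c : Dicycle D, c.IsEven
    swap
    · exact Or.inr ⟨∅, by simp, fun c _ hc => hex ⟨c, hc⟩⟩
    obtain ⟨c0, hc0⟩ := hex
    letI : Fintype 𝒯.T := 𝒯.fintypeT
    set depth : 𝒯.T → ℕ := fun s => Nat.find (𝒯.reaches_root s) with hdepth
    set S : Set 𝒯.T :=
      {s | ∃ c : Dicycle D, c.IsEven ∧ c.support ⊆ 𝒯.subtreeBag s} with hSdef
    have hrootS : 𝒯.root ∈ S :=
      ⟨c0, hc0, by rw [𝒯.subtreeBag_root]; exact Set.subset_univ _⟩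
    obtain ⟨s, hsS, hsmax⟩ := Set.exists_max_image S depth S.toFinite ⟨_, hrootS⟩
    -- key claim
    have key : ∀ c' : Dicycle D, c'.IsEven → Disjoint c'.support (𝒯.Gam s) →
        Disjoint c'.support (𝒯.subtreeBag s) := by
      intro c' hc'ev hdisj
      rw [Set.disjoint_left]
      intro v hv hvB
      -- Step 1: support ⊆ subtreeBag s
      have hsub : c'.support ⊆ 𝒯.subtreeBag s := by
        by_contra hcon
        obtain ⟨u, hu, huB⟩ := Set.not_subset.mp hcon
        have hsroot : s ≠ 𝒯.root := by
          rintro rfl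
          rw [𝒯.subtreeBag_root] at huB
          exact huB trivial
        obtain ⟨w, hw, hwY⟩ :=
          dicycle_hits (𝒯.guards s hsroot) c' ⟨v, hv, hvB⟩ ⟨u, hu, huB⟩
        exact Set.disjoint_left.mp hdisj hw (𝒯.guard_subset_Gam hsroot (Or.inl rfl) hwY)
      -- Step 2: find the child
      obtain ⟨s0, hs0mem, hv0⟩ : ∃ s0, (∃ n : ℕ, 𝒯.parent^[n] s0 = s) ∧ v ∈ 𝒯.bag s0 := by
        simpa [DirTreeDecomp.subtreeBag] using hvB
      have hs0ne : s0 ≠ s := by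
        rintro rfl
        exact Set.disjoint_left.mp hdisj hv (𝒯.bag_subset_Gam _ hv0)
      set n0 := Nat.find hs0mem with hn0def
      have hn0 : 𝒯.parent^[n0] s0 = s := Nat.find_spec hs0mem
      have hn0pos : 0 < n0 := by
        rcases Nat.eq_zero_or_pos n0 with h | h
        · rw [h] at hn0; exact absurd hn0 hs0ne
        · exact h
      set ch := 𝒯.parent^[n0 - 1] s0 with hchdef
      have hch : 𝒯.parent ch = s := by
        have h1 : 𝒯.parent^[(n0 - 1) + 1] s0 = 𝒯.parent (𝒯.parent^[n0 - 1] s0) :=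
          Function.iterate_succ_apply' 𝒯.parent (n0 - 1) s0
        rw [Nat.sub_add_cancel hn0pos, hn0] at h1
        exact h1.symm
      have hchs : ch ≠ s := by
        intro h
        exact Nat.find_min hs0mem (m := n0 - 1) (by rw [← hn0def]; omega) h
      have hchroot : ch ≠ 𝒯.root := by
        intro h
        have hsr : s = 𝒯.root := by rw [← hch, h, 𝒯.parent_root]
        exact hchs (h.trans hsr.symm)
      -- Step 3: support ⊆ subtreeBag ch
      have hvch : v ∈ 𝒯.subtreeBag ch :=
        Set.mem_biUnion ⟨n0 - 1, rfl⟩ hv0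
      have hsub2 : c'.support ⊆ 𝒯.subtreeBag ch := by
        by_contra hcon
        obtain ⟨u, hu, huB⟩ := Set.not_subset.mp hcon
        obtain ⟨w, hw, hwY⟩ :=
          dicycle_hits (𝒯.guards ch hchroot) c' ⟨v, hv, hvch⟩ ⟨u, hu, huB⟩
        exact Set.disjoint_left.mp hdisj hw
          (𝒯.guard_subset_Gam hchroot (Or.inr hch) hwY)
      -- Step 4: depth contradiction
      have hchS : ch ∈ S := ⟨c', hc'ev, hsub2⟩
      have hle := hsmax ch hchS
      have hdch : 𝒯.parent^[depth ch] ch = 𝒯.root := Nat.find_spec (𝒯.reaches_root ch)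
      have hdchpos : 0 < depth ch := by
        rcases Nat.eq_zero_or_pos (depth ch) with h | h
        · rw [h] at hdch
          exact absurd hdch hchroot
        · exact h
      have hds : 𝒯.parent^[depth ch - 1] s = 𝒯.root := by
        have h1 : 𝒯.parent^[(depth ch - 1) + 1] ch = 𝒯.parent^[depth ch - 1] (𝒯.parent ch) :=
          Function.iterate_succ_apply 𝒯.parent (depth ch - 1) ch
        rw [Nat.sub_add_cancel hdchpos, hch] at h1
        rw [← h1]
        exact hdch
      have hfin : depth s ≤ depth ch - 1 := Nat.find_le hds
      omega
    -- the chosen cycle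
    obtain ⟨cs, hcsev, hcssub⟩ := hsS
    set U : Set V := (𝒯.subtreeBag s ∪ 𝒯.Gam s)ᶜ with hUdef
    letI : Fintype ↥U := Fintype.ofFinite _
    have hwidth' : ∀ s' : (𝒯.restrict U).T, (((𝒯.restrict U)).Gam s').ncard ≤ k := by
      intro s'
      rw [𝒯.restrict_Gam U s']
      exact le_trans (ncard_preimage_val_le U _) (hwidth s')
    rcases IH ↥U (restr D U) k hk (𝒯.restrict U) hwidth' with ⟨C', hC'ev, hC'disj⟩ | ⟨A', hA'card, hA'hit⟩
    · -- build t+1 disjoint cycles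
      have hliftU : ∀ i, ((C' i).lift).support ⊆ U := by
        intro i v hv
        rw [Dicycle.lift_support] at hv
        obtain ⟨x, _, rfl⟩ := hv
        exact x.2
      have hd0 : ∀ i : Fin t, Disjoint cs.support ((C' i).lift).support := by
        intro i
        rw [Set.disjoint_left]
        intro x hx hx'
        exact (hliftU i hx') (Or.inl (hcssub hx))
      refine Or.inl ⟨Fin.cons cs (fun i => (C' i).lift), ?_, ?_⟩
      · intro i
        rcases Fin.eq_zero_or_eq_succ i with rfl | ⟨i', rfl⟩
        · simpa using hcsev
        · simp only [Fin.cons_succ]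
          exact hC'ev i'
      · intro i j hij
        rcases Fin.eq_zero_or_eq_succ i with rfl | ⟨i', rfl⟩ <;>
          rcases Fin.eq_zero_or_eq_succ j with rfl | ⟨j', rfl⟩
        · exact absurd rfl hij
        · simpa using hd0 j'
        · simpa using (hd0 i').symm
        · simp only [Fin.cons_succ]
          have hij' : i' ≠ j' := fun h => hij (by rw [h])
          rw [Dicycle.lift_support, Dicycle.lift_support]
          rw [Set.disjoint_left]
          rintro x ⟨a, ha, rfl⟩ ⟨b, hb, hab⟩
          have : a = b := Subtype.val_injective hab.symm
          exact Set.disjoint_left.mp (hC'disj i' j' hij') ha (this ▸ hb)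
    · -- build the hitting set
      refine Or.inr ⟨Subtype.val '' A' ∪ 𝒯.Gam s, ?_, ?_⟩
      · calc (Subtype.val '' A' ∪ 𝒯.Gam s).ncard
            ≤ (Subtype.val '' A').ncard + (𝒯.Gam s).ncard := Set.ncard_union_le _ _
          _ ≤ k * (t - 1) + k := by
              refine add_le_add ?_ (hwidth s)
              rw [Set.ncard_image_of_injective _ Subtype.val_injective]
              exact hA'card
          _ = k * ((t - 1) + 1) := by ring
          _ = k * (t + 1 - 1) := by
              congr 1
              omega
      · intro c' hdisj hev
        have hdisjΓ : Disjoint c'.support (𝒯.Gam s) :=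
          hdisj.mono_right Set.subset_union_right
        have hdisjB : Disjoint c'.support (𝒯.subtreeBag s) := key c' hev hdisjΓ
        have hsubU : c'.support ⊆ U := by
          intro x hx
          rw [hUdef]
          intro hmem
          rcases hmem with h | h
          · exact Set.disjoint_left.mp hdisjB hx h
          · exact Set.disjoint_left.mp hdisjΓ hx h
        refine hA'hit (c'.restrict U hsubU) ?_ hev
        rw [Set.disjoint_left]
        intro a ha haA'
        exact Set.disjoint_left.mp hdisj (Dicycle.restrict_support_subset ha)
          (Or.inl ⟨a, haA', rfl⟩)

end Aux

/-- **Erdős–Pósa for even dicycles in digraphs of low directed treewidth.**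
If `D` has a directed tree-decomposition all of whose sets `Γ(t)` have size at most `k`
(i.e. of width less than `k`), then `D` has `t` pairwise vertex-disjoint even dicycles,
or a set `A` of at most `k·(t−1)` vertices such that `D − A` has no even dicycle. -/
theorem lowDirectedTreewidth_ErdosPosa
    (V : Type) [Fintype V] (D : V → V → Prop) (hD : Irreflexive D)
    (k t : ℕ) (hk : 1 ≤ k) (ht : 1 ≤ t)
    (𝒯 : DirTreeDecomp D) (hwidth : ∀ s : 𝒯.T, (𝒯.Gam s).ncard ≤ k) :
    (∃ C : Fin t → Dicycle D, (∀ i, (C i).IsEven) ∧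
        ∀ i j : Fin t, i ≠ j → Disjoint (C i).support (C j).support) ∨
      ∃ A : Set V, A.ncard ≤ k * (t - 1) ∧
        ∀ c : Dicycle D, Disjoint c.support A → ¬ c.IsEven := by
  exact aux_ErdosPosa t ht V D k hk 𝒯 hwidth
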